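/- Let A : ℂ^p × ℂ^q → ℂ and B : ℂ^p × ℂ^q → ℂ be bilinear forms. There exist homeomorphisms φ₁ : ℂ^p → ℂ^p and φ₂ : ℂ^q → ℂ^q such that A(u,v) = B(φ₁ u, φ₂ v) for all u ∈ ℂ^p, v ∈ ℂ^q, if and only if there exist linear bijections ψ₁ : ℂ^p → ℂ^p and ψ₂ : ℂ^q → ℂ^q such that A(u,v) = B(ψ₁ u, ψ₂ v) for all u ∈ ℂ^p, v ∈ ℂ^q. -/

import Mathlib

open LinearMap Submodule Module

/-- Two linear maps between finite-dimensional vector spaces with equal rank are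
equivalent. -/
theorem aux_equiv_of_finrank_range_eq {K U V : Type*} [Field K]
    [AddCommGroup U] [Module K U] [AddCommGroup V] [Module K V]
    [FiniteDimensional K U] [FiniteDimensional K V]
    (f g : U →ₗ[K] V)
    (h : Module.finrank K (LinearMap.range f) = Module.finrank K (LinearMap.range g)) :
    ∃ (e₁ : U ≃ₗ[K] U) (e₂ : V ≃ₗ[K] V), ∀ u, f u = e₂ (g (e₁ u)) := by
  obtain ⟨Cf, hCf⟩ := Submodule.exists_isCompl (LinearMap.ker f)
  obtain ⟨Cg, hCg⟩ := Submodule.exists_isCompl (LinearMap.ker g)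
  obtain ⟨Df, hDf⟩ := Submodule.exists_isCompl (LinearMap.range f)
  obtain ⟨Dg, hDg⟩ := Submodule.exists_isCompl (LinearMap.range g)
  -- isomorphisms between the pieces
  have hker : Module.finrank K (LinearMap.ker f) = Module.finrank K (LinearMap.ker g) := by
    have h1 := LinearMap.finrank_range_add_finrank_ker f
    have h2 := LinearMap.finrank_range_add_finrank_ker g
    omega
  have hD : Module.finrank K Df = Module.finrank K Dg := by
    have h1 := Submodule.finrank_add_eq_of_isCompl hDf
    have h2 := Submodule.finrank_add_eq_of_isCompl hDg
    omega
  let σf : Cf ≃ₗ[K] LinearMap.range f :=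
    (Submodule.quotientEquivOfIsCompl _ _ hCf).symm.trans f.quotKerEquivRange
  let σg : Cg ≃ₗ[K] LinearMap.range g :=
    (Submodule.quotientEquivOfIsCompl _ _ hCg).symm.trans g.quotKerEquivRange
  have hσf : ∀ c : Cf, (σf c : V) = f c := fun c => rfl
  have hσg : ∀ c : Cg, (σg c : V) = g c := fun c => rfl
  let κ : (LinearMap.ker f) ≃ₗ[K] (LinearMap.ker g) := LinearEquiv.ofFinrankEq _ _ hker
  let ρ : (LinearMap.range f) ≃ₗ[K] (LinearMap.range g) := LinearEquiv.ofFinrankEq _ _ h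
  let δ : Df ≃ₗ[K] Dg := LinearEquiv.ofFinrankEq _ _ hD
  let γ : Cf ≃ₗ[K] Cg := (σf.trans ρ).trans σg.symm
  let e₁ : U ≃ₗ[K] U :=
    ((Submodule.prodEquivOfIsCompl _ _ hCf).symm.trans (κ.prodCongr γ)).trans
      (Submodule.prodEquivOfIsCompl _ _ hCg)
  let e₂ : V ≃ₗ[K] V :=
    ((Submodule.prodEquivOfIsCompl _ _ hDf).symm.trans (ρ.prodCongr δ)).trans
      (Submodule.prodEquivOfIsCompl _ _ hDg)
  refine ⟨e₁, e₂.symm, fun u => ?_⟩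
  -- decompose u
  obtain ⟨kc, rfl⟩ := (Submodule.prodEquivOfIsCompl _ _ hCf).surjective u
  obtain ⟨k, c⟩ := kc
  have hu : (Submodule.prodEquivOfIsCompl _ _ hCf) (k, c) = (k : U) + (c : U) :=
    Submodule.coe_prodEquivOfIsCompl' _ _ hCf (k, c)
  have he₁ : e₁ ((Submodule.prodEquivOfIsCompl _ _ hCf) (k, c))
      = (κ k : U) + (γ c : U) := by
    simp only [e₁, LinearEquiv.trans_apply, LinearEquiv.symm_apply_apply]
    exact Submodule.coe_prodEquivOfIsCompl' _ _ hCg _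
  -- compute both sides
  have hf : f ((Submodule.prodEquivOfIsCompl _ _ hCf) (k, c)) = (σf c : V) := by
    rw [hu, map_add, k.2, zero_add, hσf]
  have hg : g (e₁ ((Submodule.prodEquivOfIsCompl _ _ hCf) (k, c))) = (σg (γ c) : V) := by
    rw [he₁, map_add, (κ k).2, zero_add, hσg]
  rw [LinearEquiv.eq_symm_apply, hf, hg]
  have h1 : (σg (γ c) : V) = (ρ (σf c) : V) := by
    simp only [γ, LinearEquiv.trans_apply, LinearEquiv.apply_symm_apply]
  rw [h1]
  -- e₂ on an element of range f
  have h2 : (ρ (σf c) : V) = e₂ ((σf c : V)) := by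
    have hdec : (Submodule.prodEquivOfIsCompl _ _ hDf) (σf c, (0 : Df)) = ((σf c : V)) := by
      rw [Submodule.coe_prodEquivOfIsCompl' _ _ hDf]; simp
    have : e₂ ((Submodule.prodEquivOfIsCompl _ _ hDf) (σf c, (0 : Df)))
        = (ρ (σf c) : V) + ((δ 0 : Dg) : V) := by
      simp only [e₂, LinearEquiv.trans_apply, LinearEquiv.symm_apply_apply]
      exact Submodule.coe_prodEquivOfIsCompl' _ _ hDg _
    rw [hdec] at this
    simp only [map_zero] at this
    rw [this]
    simp
  exact h2.symm

theorem stmt_3 (p q : ℕ)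
    (A B : (Fin p → ℂ) →ₗ[ℂ] (Fin q → ℂ) →ₗ[ℂ] ℂ) :
    (∃ (φ₁ : (Fin p → ℂ) ≃ₜ (Fin p → ℂ)) (φ₂ : (Fin q → ℂ) ≃ₜ (Fin q → ℂ)),
        ∀ u v, A u v = B (φ₁ u) (φ₂ v)) ↔
    (∃ (ψ₁ : (Fin p → ℂ) ≃ₗ[ℂ] (Fin p → ℂ)) (ψ₂ : (Fin q → ℂ) ≃ₗ[ℂ] (Fin q → ℂ)),
        ∀ u v, A u v = B (ψ₁ u) (ψ₂ v)) := by
  constructor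
  · rintro ⟨φ₁, φ₂, hφ⟩
    -- Step 1: ranks of A and B (as maps into the dual) are equal.
    have key : ∀ c : LinearMap.range B, ∃ u, ∀ v, A u v = (c : (Fin q → ℂ) →ₗ[ℂ] ℂ) (φ₂ v) := by
      rintro ⟨c, x, rfl⟩
      obtain ⟨u, rfl⟩ := φ₁.surjective x
      exact ⟨u, fun v => hφ u v⟩
    let F : LinearMap.range B → LinearMap.range A :=
      fun c => ⟨A (key c).choose, LinearMap.mem_range_self _ _⟩
    have hF : ∀ (c : LinearMap.range B) (v), ((F c : _) : (Fin q → ℂ) →ₗ[ℂ] ℂ) v = (c : (Fin q → ℂ) →ₗ[ℂ] ℂ) (φ₂ v) :=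
      fun c => (key c).choose_spec
    have hFinj : Function.Injective F := by
      intro c c' hcc
      apply Subtype.ext
      refine LinearMap.ext fun v' => ?_
      obtain ⟨v, rfl⟩ := φ₂.surjective v'
      rw [← hF c v, ← hF c' v, hcc]
    have hFsurj : Function.Surjective F := by
      rintro ⟨a, u, rfl⟩
      refine ⟨⟨B (φ₁ u), LinearMap.mem_range_self _ _⟩, ?_⟩
      apply Subtype.ext
      refine LinearMap.ext fun v => ?_
      rw [hF]
      exact (hφ u v).symm
    have hFadd : ∀ c c', F (c + c') = F c + F c' := by
      intro c c'
      apply Subtype.ext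
      refine LinearMap.ext fun w => ?_
      have h1 := hF (c + c') w
      have h2 := hF c w
      have h3 := hF c' w
      simp only [Submodule.coe_add, LinearMap.add_apply] at h1 ⊢
      rw [h1, h2, h3]
    have hFsmul : ∀ (m : ℂ) c, F (m • c) = m • F c := by
      intro m c
      apply Subtype.ext
      refine LinearMap.ext fun w => ?_
      have h1 := hF (m • c) w
      have h2 := hF c w
      simp only [Submodule.coe_smul, LinearMap.smul_apply] at h1 ⊢
      rw [h1, h2]
    let Feq : LinearMap.range B ≃ₗ[ℂ] LinearMap.range A :=
      LinearEquiv.ofBijective ⟨⟨F, fun a b => hFadd a b⟩, fun m c => hFsmul m c⟩ ⟨hFinj, hFsurj⟩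
    have hrank : Module.finrank ℂ (LinearMap.range A) = Module.finrank ℂ (LinearMap.range B) :=
      Feq.finrank_eq.symm
    -- Step 2: classification
    obtain ⟨e₁, e₂, he⟩ := aux_equiv_of_finrank_range_eq A B hrank
    -- Step 3: turn the dual automorphism e₂ into an automorphism ψ₂ of ℂ^q.
    let V := Fin q → ℂ
    let ψ₂ : V ≃ₗ[ℂ] V :=
      ((Module.evalEquiv ℂ V).trans e₂.dualMap).trans (Module.evalEquiv ℂ V).symm
    refine ⟨e₁, ψ₂, fun u v => ?_⟩
    have : B (e₁ u) (ψ₂ v) = e₂ (B (e₁ u)) v := by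
      simp only [ψ₂, LinearEquiv.trans_apply]
      rw [Module.apply_evalEquiv_symm_apply]
      rfl
    rw [this, he]
  · rintro ⟨ψ₁, ψ₂, hψ⟩
    exact ⟨ψ₁.toContinuousLinearEquiv.toHomeomorph,
      ψ₂.toContinuousLinearEquiv.toHomeomorph, hψ⟩
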